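/- Let (x,y,z) ∈ ℂ³ with x² + y² + z² - xyz = μ. Then log⁺|z| ≤ log 4 + log⁺|μ| + log⁺|x| + log⁺|y|, where log⁺ t = max{0, log t} for t > 0 (and log⁺ 0 := 0). -/

import Mathlib

/-- log⁺ t = max {0, log t}, with log⁺ 0 = 0. -/
noncomputable def logPlus (t : ℝ) : ℝ := max 0 (Real.log t)

lemma logPlus_eq_log_max (t : ℝ) (ht : 0 ≤ t) : logPlus t = Real.log (max 1 t) := by
  unfold logPlus
  rcases le_total t 1 with h1 | h1
  · rw [max_eq_left h1, Real.log_one, max_eq_left (Real.log_nonpos ht h1)]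
  · rw [max_eq_right h1, max_eq_right (Real.log_nonneg h1)]

set_option maxHeartbeats 1000000 in
theorem upper_fibonacci_bound (μ x y z : ℂ)
    (h : x ^ 2 + y ^ 2 + z ^ 2 - x * y * z = μ) :
    logPlus (‖z‖) ≤
      Real.log 4 + logPlus (‖μ‖) + logPlus (‖x‖) +
        logPlus (‖y‖) := by
  set a := ‖x‖ with ha
  set b := ‖y‖ with hb
  set c := ‖z‖ with hc
  set m := ‖μ‖ with hm
  set X := max 1 a with hX
  set Y := max 1 b with hY
  set M := max 1 m with hM
  have ha0 : 0 ≤ a := norm_nonneg x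
  have hb0 : 0 ≤ b := norm_nonneg y
  have hc0 : 0 ≤ c := norm_nonneg z
  have hm0 : 0 ≤ m := norm_nonneg μ
  have hX1 : (1:ℝ) ≤ X := le_max_left _ _
  have hY1 : (1:ℝ) ≤ Y := le_max_left _ _
  have hM1 : (1:ℝ) ≤ M := le_max_left _ _
  have haX : a ≤ X := le_max_right _ _
  have hbY : b ≤ Y := le_max_right _ _
  have hmM : m ≤ M := le_max_right _ _
  -- key inequality c^2 ≤ m + a^2 + b^2 + a*b*c
  have hz2 : z ^ 2 = μ - x ^ 2 - y ^ 2 + x * y * z := by linear_combination h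
  have hkey : c ^ 2 ≤ m + a ^ 2 + b ^ 2 + a * b * c := by
    have h1 : ‖z ^ 2‖ ≤
        ‖μ‖ + ‖x ^ 2‖ + ‖y ^ 2‖
          + ‖x * y * z‖ := by
      rw [hz2]
      calc ‖μ - x ^ 2 - y ^ 2 + x * y * z‖
          ≤ ‖μ - x ^ 2 - y ^ 2‖ + ‖x * y * z‖ :=
            norm_add_le _ _
        _ ≤ (‖μ - x ^ 2‖ + ‖y ^ 2‖) + ‖x * y * z‖ := by
            gcongr; exact norm_sub_le _ _
        _ ≤ ((‖μ‖ + ‖x ^ 2‖) + ‖y ^ 2‖)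
              + ‖x * y * z‖ := by
            gcongr; exact norm_sub_le _ _
        _ = _ := by ring
    simpa [norm_pow, norm_mul, ← ha, ← hb, ← hc, ← hm, mul_comm, mul_assoc, mul_left_comm]
      using h1
  clear_value a b c m X Y M
  clear h hz2 ha hb hc hm
  have hX0 : (0:ℝ) ≤ X := by linarith
  have hY0 : (0:ℝ) ≤ Y := by linarith
  have hM0 : (0:ℝ) ≤ M := by linarith
  have hMX1 : (1:ℝ) ≤ M * X := by
    calc (1:ℝ) = 1 * 1 := by norm_num
      _ ≤ M * X := mul_le_mul hM1 hX1 zero_le_one hM0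
  have hMXY : (1:ℝ) ≤ M * X * Y := by
    calc (1:ℝ) = 1 * 1 := by norm_num
      _ ≤ M * X * Y := mul_le_mul hMX1 hY1 zero_le_one (by linarith)
  have hmMXY : m ≤ M * X * Y := by
    calc m ≤ M := hmM
      _ ≤ M * X := le_mul_of_one_le_right hM0 hX1
      _ ≤ M * X * Y := le_mul_of_one_le_right (by linarith) hY1
  have haMXY : a ≤ M * X * Y := by
    calc a ≤ X := haX
      _ ≤ M * X := le_mul_of_one_le_left hX0 hM1
      _ ≤ M * X * Y := le_mul_of_one_le_right (by linarith) hY1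
  have hbMXY : b ≤ M * X * Y := by
    calc b ≤ Y := hbY
      _ ≤ M * X * Y := le_mul_of_one_le_left hY0 hMX1
  have habXY : a * b ≤ M * X * Y := by
    calc a * b ≤ X * Y := mul_le_mul haX hbY hb0 hX0
      _ ≤ M * (X * Y) := le_mul_of_one_le_left (mul_nonneg hX0 hY0) hM1
      _ = M * X * Y := by ring
  -- bound c ≤ 4 * M * X * Y
  have hbound : c ≤ 4 * M * X * Y := by
    by_contra hcon
    push_neg at hcon
    have hc4 : 4 < c := by linarith
    have hm' : m < c / 4 := by linarith
    have ha' : a < c / 4 := by linarith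
    have hb' : b < c / 4 := by linarith
    have hab' : a * b < c / 4 := by linarith
    have ha2 : a ^ 2 < c ^ 2 / 16 := by
      have := mul_lt_mul'' ha' ha' ha0 ha0
      calc a ^ 2 = a * a := sq a
        _ < c / 4 * (c / 4) := this
        _ = c ^ 2 / 16 := by ring
    have hb2 : b ^ 2 < c ^ 2 / 16 := by
      have := mul_lt_mul'' hb' hb' hb0 hb0
      calc b ^ 2 = b * b := sq b
        _ < c / 4 * (c / 4) := this
        _ = c ^ 2 / 16 := by ring
    have habc : a * b * c < c / 4 * c :=
      mul_lt_mul_of_pos_right hab' (by linarith)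
    have hcc : (0:ℝ) < (c - 4) * c := mul_pos (by linarith) (by linarith)
    have hcc' : 4 * c < c ^ 2 := by nlinarith [hcc]
    nlinarith [hkey, hm', ha2, hb2, habc, hcc']
  have hXY0 : (0:ℝ) < 4 * M * X * Y := by linarith
  have hlog4 : Real.log (4 * M * X * Y) = Real.log 4 + Real.log M + Real.log X + Real.log Y := by
    rw [Real.log_mul (ne_of_gt (by linarith)) (ne_of_gt (by linarith)),
      Real.log_mul (ne_of_gt (by linarith)) (ne_of_gt (by linarith)),
      Real.log_mul (by norm_num) (ne_of_gt (by linarith))]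
  have hRHSge : Real.log c ≤ Real.log (4 * M * X * Y) := by
    rcases le_or_gt c 1 with h1 | h1
    · calc Real.log c ≤ 0 := Real.log_nonpos hc0 h1
        _ ≤ Real.log (4 * M * X * Y) := Real.log_nonneg (by linarith)
    · exact Real.log_le_log (by linarith) hbound
  have hlp : logPlus c ≤ Real.log (4 * M * X * Y) := by
    apply max_le _ hRHSge
    exact Real.log_nonneg (by linarith)
  rw [logPlus_eq_log_max m hm0, logPlus_eq_log_max a ha0, logPlus_eq_log_max b hb0,
    ← hM, ← hX, ← hY]
  calc logPlus c ≤ Real.log (4 * M * X * Y) := hlp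
    _ = Real.log 4 + Real.log M + Real.log X + Real.log Y := hlog4
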